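/- (Convex hull property) Let q > 0, let k ∈ ℤ, let w_0,…,w_n be positive weights, let b_0,…,b_n be points in ℝ^d, and let R(x) = Σ_{i=0}^{n} b_i·R^n_i(x;q) be the rational quantum trigonometric Bézier curve on [kπ/2, (k+1)π/2]. Then for every x ∈ [kπ/2, (k+1)π/2], the point R(x) lies in the convex hull of the set {b_0, b_1, …, b_n}. -/
import Mathlib


/-- `d(x,y;c) = ((c+1)/2)·sin(y−x) + ((c−1)/2)·sin(y+x)`. -/
noncomputable def dq (x y c : ℝ) : ℝ :=
  (c + 1) / 2 * Real.sin (y - x) + (c - 1) / 2 * Real.sin (y + x)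

/-- The q-integer `[k]_q = 1 + q + ⋯ + q^{k−1}`. -/
noncomputable def qInt (q : ℝ) (k : ℕ) : ℝ := ∑ i ∈ Finset.range k, q ^ i

/-- The q-factorial `[k]_q!`. -/
noncomputable def qFact (q : ℝ) : ℕ → ℝ
  | 0 => 1
  | k + 1 => qInt q (k + 1) * qFact q k

/-- The q-binomial coefficient `[n choose k]_q`. -/
noncomputable def qBinom (q : ℝ) (n k : ℕ) : ℝ :=
  qFact q n / (qFact q k * qFact q (n - k))

/-- Quantum trigonometric Bernstein basis function `B^n_k(x;q)` on `[a,b]`. -/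
noncomputable def qBern (q a b : ℝ) (n k : ℕ) (x : ℝ) : ℝ :=
  qBinom q n k *
    ((∏ i ∈ Finset.range k, dq a x (q ^ i)) * ∏ i ∈ Finset.range (n - k), dq x b (q ^ i)) /
    ∏ i ∈ Finset.range n, dq a b (q ^ i)

/-- A matrix is totally positive if all its minors are nonnegative. -/
def IsTotallyPositive {p r : ℕ} (M : Matrix (Fin p) (Fin r) ℝ) : Prop :=
  ∀ (k : ℕ) (f : Fin k → Fin p) (g : Fin k → Fin r),
    StrictMono f → StrictMono g → 0 ≤ (M.submatrix f g).det

/-- A system of functions is totally positive on `I` if all its collocation matrices at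
increasing points of `I` are totally positive. -/
def IsTotallyPositiveSystem (I : Set ℝ) {n : ℕ} (φ : Fin n → ℝ → ℝ) : Prop :=
  ∀ (m : ℕ) (x : Fin (m + 1) → ℝ), StrictMono x → (∀ j, x j ∈ I) →
    IsTotallyPositive (Matrix.of fun i j => φ i (x j))

/-- Number of sign changes between consecutive entries of a list. -/
noncomputable def signChanges : List ℝ → ℕ
  | [] => 0
  | [_] => 0
  | a :: b :: t => (if a * b < 0 then 1 else 0) + signChanges (b :: t)

/-- `S⁻(v)`: the number of strict sign changes of a finite real sequence, i.e. the number
of sign changes after deleting all zero entries. -/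
noncomputable def strictSignChanges (v : List ℝ) : ℕ :=
  signChanges (v.filter fun x => x ≠ 0)

/-- Rational quantum trigonometric Bernstein basis function `R^n_k(x;q)` with weights `w`. -/
noncomputable def rqBern (q a b : ℝ) (n : ℕ) (w : Fin (n + 1) → ℝ) (k : Fin (n + 1)) (x : ℝ) : ℝ :=
  w k * qBern q a b n k x / ∑ i : Fin (n + 1), w i * qBern q a b n i x

section Aux

private noncomputable def E (k : ℤ) (c : ℝ) : ℝ := (c + 1) / 2 + (-1 : ℝ) ^ k * ((c - 1) / 2)

private lemma E_pos (k : ℤ) {c : ℝ} (hc : 0 < c) : 0 < E k c := by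
  rcases Int.even_or_odd k with h | h
  · rw [E, h.neg_one_zpow]; linarith
  · rw [E, h.neg_one_zpow]; linarith

private lemma dq_ax (k : ℤ) (c x : ℝ) :
    dq ((k : ℝ) * Real.pi / 2) x c = Real.sin (x - (k : ℝ) * Real.pi / 2) * E k c := by
  have h : x + (k : ℝ) * Real.pi / 2 = (x - (k : ℝ) * Real.pi / 2) + (k : ℤ) * Real.pi := by
    ring
  rw [dq, h, Real.sin_add_int_mul_pi, E]; ring

private lemma dq_xb (k : ℤ) (c x : ℝ) :
    dq x (((k : ℝ) + 1) * Real.pi / 2) c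
      = Real.sin (((k : ℝ) + 1) * Real.pi / 2 - x) * E k c := by
  have h : ((k : ℝ) + 1) * Real.pi / 2 + x
      = -(((k : ℝ) + 1) * Real.pi / 2 - x) + ((k + 1 : ℤ) : ℝ) * Real.pi := by
    push_cast; ring
  rw [dq, h, Real.sin_add_int_mul_pi, Real.sin_neg,
    zpow_add_one₀ (by norm_num : (-1 : ℝ) ≠ 0), E]
  ring

private lemma dq_ab (k : ℤ) (c : ℝ) :
    dq ((k : ℝ) * Real.pi / 2) (((k : ℝ) + 1) * Real.pi / 2) c = E k c := by
  have h1 : ((k : ℝ) + 1) * Real.pi / 2 - (k : ℝ) * Real.pi / 2 = Real.pi / 2 := by ring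
  have h2 : ((k : ℝ) + 1) * Real.pi / 2 + (k : ℝ) * Real.pi / 2
      = Real.pi / 2 + (k : ℤ) * Real.pi := by ring
  rw [dq, h1, h2, Real.sin_add_int_mul_pi, Real.sin_pi_div_two, E]; ring

private lemma qFact_pos {q : ℝ} (hq : 0 < q) : ∀ m, 0 < qFact q m
  | 0 => by simp [qFact]
  | m + 1 => by
      rw [qFact]
      refine mul_pos ?_ (qFact_pos hq m)
      exact Finset.sum_pos (fun i _ => pow_pos hq i) (by simp)

private lemma qBinom_pos {q : ℝ} (hq : 0 < q) (n m : ℕ) : 0 < qBinom q n m :=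
  div_pos (qFact_pos hq n) (mul_pos (qFact_pos hq m) (qFact_pos hq (n - m)))

end Aux

/-- Convex hull property: a rational quantum trigonometric Bézier curve lies in the
convex hull of its control points. -/
theorem rational_bezier_convex_hull (n d : ℕ) (q : ℝ) (hq : 0 < q) (k : ℤ)
    (w : Fin (n + 1) → ℝ) (hw : ∀ i, 0 < w i) (bp : Fin (n + 1) → Fin d → ℝ) (x : ℝ)
    (hx : x ∈ Set.Icc ((k : ℝ) * Real.pi / 2) (((k : ℝ) + 1) * Real.pi / 2)) :
    (∑ i : Fin (n + 1),
        rqBern q ((k : ℝ) * Real.pi / 2) (((k : ℝ) + 1) * Real.pi / 2) n w i x • bp i) ∈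
      convexHull ℝ (Set.range bp) := by
  set a : ℝ := (k : ℝ) * Real.pi / 2 with ha
  set b : ℝ := ((k : ℝ) + 1) * Real.pi / 2 with hb
  obtain ⟨hax, hxb⟩ := hx
  have hpi := Real.pi_pos
  have hba : b - a = Real.pi / 2 := by rw [ha, hb]; ring
  have hs1 : 0 ≤ Real.sin (x - a) :=
    Real.sin_nonneg_of_nonneg_of_le_pi (by linarith) (by linarith)
  have hs2 : 0 ≤ Real.sin (b - x) :=
    Real.sin_nonneg_of_nonneg_of_le_pi (by linarith) (by linarith)
  have hdab : ∀ i : ℕ, 0 < dq a b (q ^ i) := fun i => by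
    rw [ha, hb, dq_ab]; exact E_pos k (pow_pos hq i)
  have hprod_ab : ∀ m : ℕ, 0 < ∏ i ∈ Finset.range m, dq a b (q ^ i) :=
    fun m => Finset.prod_pos fun i _ => hdab i
  have hBnn : ∀ j : Fin (n + 1), 0 ≤ qBern q a b n j x := by
    intro j
    rw [qBern]
    apply div_nonneg _ (hprod_ab n).le
    apply mul_nonneg (qBinom_pos hq n j).le
    apply mul_nonneg
    · exact Finset.prod_nonneg fun i _ => by
        rw [ha, dq_ax]; exact mul_nonneg hs1 (E_pos k (pow_pos hq i)).le
    · exact Finset.prod_nonneg fun i _ => by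
        rw [hb, dq_xb]; exact mul_nonneg hs2 (E_pos k (pow_pos hq i)).le
  have hD : 0 < ∑ i : Fin (n + 1), w i * qBern q a b n i x := by
    apply Finset.sum_pos' (fun i _ => mul_nonneg (hw i).le (hBnn i))
    rcases eq_or_lt_of_le hxb with hxe | hxl
    · refine ⟨Fin.last n, Finset.mem_univ _, mul_pos (hw _) ?_⟩
      rw [qBern]
      simp only [Fin.val_last, Nat.sub_self, Finset.range_zero, Finset.prod_empty, mul_one]
      apply div_pos _ (hprod_ab n)
      apply mul_pos (qBinom_pos hq n n)
      apply Finset.prod_pos fun i _ => by rw [hxe]; exact hdab i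
    · refine ⟨0, Finset.mem_univ _, mul_pos (hw _) ?_⟩
      rw [qBern]
      simp only [Fin.val_zero, Finset.range_zero, Finset.prod_empty, one_mul, Nat.sub_zero]
      apply div_pos _ (hprod_ab n)
      apply mul_pos (qBinom_pos hq n 0)
      apply Finset.prod_pos fun i _ => by
        rw [hb, dq_xb]
        exact mul_pos (Real.sin_pos_of_pos_of_lt_pi (by linarith) (by linarith))
          (E_pos k (pow_pos hq i))
  have hsum : ∑ i : Fin (n + 1), rqBern q a b n w i x = 1 := by
    simp only [rqBern]
    rw [← Finset.sum_div, div_self hD.ne']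
  have h0 : ∀ i ∈ Finset.univ, 0 ≤ rqBern q a b n w i x := fun i _ =>
    div_nonneg (mul_nonneg (hw i).le (hBnn i)) hD.le
  have hmem := Finset.centerMass_mem_convexHull Finset.univ h0
    (by rw [hsum]; exact one_pos) (fun i _ => Set.mem_range_self (f := bp) i)
  rwa [Finset.centerMass_eq_of_sum_1 _ _ hsum] at hmem
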